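/- arXiv:2308.14735 — 5 statements merged into one kernel-verified Lean document; each statement's English description precedes it below -/
import Mathlib

section
/- Let $x_0, x_1, x_2, x_3$ be nonnegative integers with $x_1 x_2 \leq x_0 x_3$ and odds ratio $OR = \frac{x_0 x_3}{x_1 x_2} > 1$. Let $p(k)$ be the hypergeometric probability that the top-left cell of the $2\times 2$ table with the given margins equals $k$. Then for every $j \geq 1$ with $x_0 + j$ feasible, $p(x_0 + j) < p(x_0) / OR^j$. -/
/-- Hypergeometric pmf for a 2×2 table with entries `x0 x1` (first row) and
`x2 x3` (second row) and fixed margins: the probability that the top-left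
cell equals `k`. -/
noncomputable def hyp2x2 (x0 x1 x2 x3 : ℕ) (k : ℕ) : ℝ :=
  ((x0 + x1).choose k * (x2 + x3).choose (x0 + x2 - k) : ℝ) /
    ((x0 + x1 + x2 + x3).choose (x0 + x2) : ℝ)

lemma hyp_nat_id (x0 x1 x2 x3 i : ℕ) (hi2 : i < x2) :
    (x0+x1).choose (x0+(i+1)) * (x2+x3).choose (x2-(i+1)) * ((x0+i+1)*(x3+i+1))
      = (x0+x1).choose (x0+i) * (x2+x3).choose (x2-i) * ((x1-i)*(x2-i)) := by
  have h1 : (x0+x1).choose (x0+i+1) * (x0+i+1) = (x0+x1).choose (x0+i) * (x1-i) := by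
    have h := Nat.choose_succ_right_eq (x0+x1) (x0+i)
    rw [show x0+x1 - (x0+i) = x1 - i from by omega] at h
    exact h
  have h2 : (x2+x3).choose (x2-i) * (x2-i) = (x2+x3).choose (x2-(i+1)) * (x3+i+1) := by
    have h := Nat.choose_succ_right_eq (x2+x3) (x2-(i+1))
    rw [show x2-(i+1)+1 = x2-i from by omega,
        show x2+x3 - (x2-(i+1)) = x3+i+1 from by omega] at h
    exact h
  calc (x0+x1).choose (x0+(i+1)) * (x2+x3).choose (x2-(i+1)) * ((x0+i+1)*(x3+i+1))
      = ((x0+x1).choose (x0+i+1) * (x0+i+1)) * ((x2+x3).choose (x2-(i+1)) * (x3+i+1)) := by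
        ring_nf
    _ = ((x0+x1).choose (x0+i) * (x1-i)) * ((x2+x3).choose (x2-i) * (x2-i)) := by
        rw [h1, ← h2]
    _ = (x0+x1).choose (x0+i) * (x2+x3).choose (x2-i) * ((x1-i)*(x2-i)) := by ring

lemma key_nat (x0 x1 x2 x3 i : ℕ) (hi1 : i+1 ≤ x1) (hi2 : i+1 ≤ x2)
    (hlt : x1*x2 < x0*x3) :
    (x0+x1).choose (x0+(i+1)) * (x2+x3).choose (x2-(i+1)) * (x0*x3)
      < (x0+x1).choose (x0+i) * (x2+x3).choose (x2-i) * (x1*x2) := by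
  have hx0 : 1 ≤ x0 := by nlinarith
  have hx3 : 1 ≤ x3 := by nlinarith
  have hC1 : 0 < (x0+x1).choose (x0+i) := Nat.choose_pos (by omega)
  have hC2 : 0 < (x2+x3).choose (x2-i) := Nat.choose_pos (by omega)
  set a := (x0+x1).choose (x0+i) * (x2+x3).choose (x2-i) with ha
  have hapos : 0 < a := Nat.mul_pos hC1 hC2
  refine lt_of_mul_lt_mul_right ?_ (Nat.zero_le ((x0+i+1)*(x3+i+1)))
  have hid := hyp_nat_id x0 x1 x2 x3 i (by omega)
  calc (x0+x1).choose (x0+(i+1)) * (x2+x3).choose (x2-(i+1)) * (x0*x3) * ((x0+i+1)*(x3+i+1))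
      = (x0+x1).choose (x0+(i+1)) * (x2+x3).choose (x2-(i+1)) * ((x0+i+1)*(x3+i+1)) * (x0*x3) := by
        ring
    _ = a * ((x1-i)*(x2-i)) * (x0*x3) := by rw [hid]
    _ ≤ a * (x1*x2) * (x0*x3) := by
        apply Nat.mul_le_mul_right
        apply Nat.mul_le_mul_left
        exact Nat.mul_le_mul (Nat.sub_le _ _) (Nat.sub_le _ _)
    _ < a * (x1*x2) * ((x0+i+1)*(x3+i+1)) := by
        apply mul_lt_mul_of_pos_left _ (Nat.mul_pos hapos (Nat.mul_pos (by omega) (by omega)))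
        nlinarith

lemma stepR (x0 x1 x2 x3 i : ℕ) (hi1 : i+1 ≤ x1) (hi2 : i+1 ≤ x2)
    (hlt : x1*x2 < x0*x3) (hx12 : 0 < x1*x2) :
    hyp2x2 x0 x1 x2 x3 (x0+(i+1)) <
      hyp2x2 x0 x1 x2 x3 (x0+i) / ((x0 * x3 : ℝ) / (x1 * x2 : ℝ)) := by
  have hD : (0:ℝ) < ((x0 + x1 + x2 + x3).choose (x0 + x2) : ℝ) := by
    exact_mod_cast Nat.choose_pos (by omega)
  have hx12R : (0:ℝ) < (x1:ℝ) * x2 := by exact_mod_cast hx12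
  have hx03R : (0:ℝ) < (x0:ℝ) * x3 := by
    have : 0 < x0*x3 := lt_of_le_of_lt (Nat.zero_le _) hlt
    exact_mod_cast this
  unfold hyp2x2
  rw [show x0+x2-(x0+(i+1)) = x2-(i+1) from by omega,
      show x0+x2-(x0+i) = x2-i from by omega, div_div,
      div_lt_div_iff₀ hD (by positivity)]
  have hk : ((x0+x1).choose (x0+(i+1)) * (x2+x3).choose (x2-(i+1)) : ℝ) * ((x0:ℝ)*x3)
      < ((x0+x1).choose (x0+i) * (x2+x3).choose (x2-i) : ℝ) * ((x1:ℝ)*x2) := by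
    exact_mod_cast key_nat x0 x1 x2 x3 i hi1 hi2 hlt
  set A := ((x0+x1).choose (x0+(i+1)) * (x2+x3).choose (x2-(i+1)) : ℝ)
  set B := ((x0+x1).choose (x0+i) * (x2+x3).choose (x2-i) : ℝ)
  set D := ((x0 + x1 + x2 + x3).choose (x0 + x2) : ℝ)
  calc A * (D * ((x0 * x3 : ℝ) / (x1 * x2 : ℝ)))
      = (A * ((x0:ℝ)*x3)) * D / ((x1:ℝ)*x2) := by field_simp
    _ < (B * ((x1:ℝ)*x2)) * D / ((x1:ℝ)*x2) := by
        gcongr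
    _ = B * D := by rw [mul_right_comm B ((x1:ℝ)*x2) D, mul_div_cancel_right₀ _ hx12R.ne']

theorem hyp2x2_tail_term_lt (x0 x1 x2 x3 : ℕ)
    (hle : x1 * x2 ≤ x0 * x3)
    (hOR : 1 < (x0 * x3 : ℝ) / (x1 * x2 : ℝ))
    (j : ℕ) (hj1 : 1 ≤ j) (hjfeas : j ≤ min x1 x2) :
    hyp2x2 x0 x1 x2 x3 (x0 + j) <
      hyp2x2 x0 x1 x2 x3 x0 / ((x0 * x3 : ℝ) / (x1 * x2 : ℝ)) ^ j := by
  have hx12 : 0 < x1 * x2 := by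
    rcases Nat.eq_zero_or_pos (x1*x2) with h | h
    · exfalso
      have h0 : ((x1:ℝ) * x2) = 0 := by exact_mod_cast h
      rw [h0, div_zero] at hOR; linarith
    · exact h
  have hx12R : (0:ℝ) < (x1:ℝ) * x2 := by exact_mod_cast hx12
  have hlt : x1 * x2 < x0 * x3 := by
    have := (one_lt_div hx12R).mp hOR
    exact_mod_cast this
  have hORpos : (0:ℝ) < (x0 * x3 : ℝ) / (x1 * x2 : ℝ) := lt_trans one_pos hOR
  induction j with
  | zero => omega
  | succ n ih =>
    rcases Nat.eq_zero_or_pos n with rfl | hn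
    · simpa [pow_one] using stepR x0 x1 x2 x3 0 (by omega) (by omega) hlt hx12
    · have ih' := ih (by omega) (by omega)
      have hstep := stepR x0 x1 x2 x3 n (by omega) (by omega) hlt hx12
      refine lt_trans hstep ?_
      have h2 : hyp2x2 x0 x1 x2 x3 (x0+n) / ((x0 * x3 : ℝ) / (x1 * x2 : ℝ))
          < (hyp2x2 x0 x1 x2 x3 x0 / ((x0 * x3 : ℝ) / (x1 * x2 : ℝ)) ^ n)
              / ((x0 * x3 : ℝ) / (x1 * x2 : ℝ)) := by
        gcongr
      calc hyp2x2 x0 x1 x2 x3 (x0+n) / ((x0 * x3 : ℝ) / (x1 * x2 : ℝ)) < _ := h2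
        _ = hyp2x2 x0 x1 x2 x3 x0 / ((x0 * x3 : ℝ) / (x1 * x2 : ℝ)) ^ (n+1) := by
            rw [div_div, ← pow_succ]
end

section
/- Let $x_0,x_1,x_2,x_3$ be nonnegative integers with odds ratio $OR = \frac{x_0x_3}{x_1x_2} > 1$, and let $p(k)$ be the hypergeometric pmf of the $2\times 2$ table with these margins. Then the one-sided tail sum satisfies $\sum_{j=1}^{x_2} p(x_0 + j) < \frac{p(x_0)}{OR - 1}$. -/
lemma hyp2x2_geom_tail_eq (r : ℝ) (n : ℕ) :
    (∑ j ∈ Finset.Icc 1 n, r ^ j) * (1 - r) + r ^ (n + 1) = r := by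
  induction n with
  | zero => simp
  | succ n ih =>
    rw [Finset.sum_Icc_succ_top (by omega)]
    linear_combination ih

lemma hyp2x2_geom_tail_lt {r : ℝ} (hr0 : 0 < r) (hr1 : r < 1) (n : ℕ) :
    ∑ j ∈ Finset.Icc 1 n, r ^ j < r / (1 - r) := by
  have h := hyp2x2_geom_tail_eq r n
  have hrn : 0 < r ^ (n + 1) := pow_pos hr0 _
  rw [lt_div_iff₀ (by linarith)]
  linarith

lemma hyp2x2_key_nat (x0 x1 x2 x3 j : ℕ) (hj : j + 1 ≤ x2) :
    (x0 + x1).choose (x0 + j + 1) * (x2 + x3).choose (x2 - (j + 1)) * (x0 * x3) ≤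
      (x0 + x1).choose (x0 + j) * (x2 + x3).choose (x2 - j) * (x1 * x2) := by
  set A := (x0 + x1).choose (x0 + j)
  set A' := (x0 + x1).choose (x0 + j + 1)
  set B := (x2 + x3).choose (x2 - j)
  set B' := (x2 + x3).choose (x2 - (j + 1))
  have e1 : A' * (x0 + j + 1) = A * (x1 - j) := by
    have h := Nat.choose_succ_right_eq (x0 + x1) (x0 + j)
    rwa [Nat.add_sub_add_left] at h
  have e2 : B * (x2 - j) = B' * (x3 + (j + 1)) := by
    have h := Nat.choose_succ_right_eq (x2 + x3) (x2 - (j + 1))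
    have h1 : x2 - (j + 1) + 1 = x2 - j := by omega
    have h2 : x2 + x3 - (x2 - (j + 1)) = x3 + (j + 1) := by omega
    rw [h1, h2] at h
    exact h
  calc A' * B' * (x0 * x3)
      ≤ A' * B' * ((x0 + j + 1) * (x3 + (j + 1))) := by
        apply Nat.mul_le_mul_left
        exact Nat.mul_le_mul (by omega) (by omega)
    _ = (A' * (x0 + j + 1)) * (B' * (x3 + (j + 1))) := by ring
    _ = (A * (x1 - j)) * (B * (x2 - j)) := by rw [e1, e2]
    _ ≤ (A * x1) * (B * x2) := Nat.mul_le_mul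
        (Nat.mul_le_mul_left _ (Nat.sub_le _ _))
        (Nat.mul_le_mul_left _ (Nat.sub_le _ _))
    _ = A * B * (x1 * x2) := by ring

lemma hyp2x2_nonneg (x0 x1 x2 x3 k : ℕ) : 0 ≤ hyp2x2 x0 x1 x2 x3 k := by
  unfold hyp2x2; positivity

lemma hyp2x2_step (x0 x1 x2 x3 j : ℕ) (hj : j + 1 ≤ x2) (hx03 : (0:ℝ) < (x0 * x3 : ℕ)) :
    hyp2x2 x0 x1 x2 x3 (x0 + (j + 1)) ≤
      hyp2x2 x0 x1 x2 x3 (x0 + j) * ((x1 * x2 : ℝ) / (x0 * x3 : ℝ)) := by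
  have hD : (0:ℝ) < ((x0 + x1 + x2 + x3).choose (x0 + x2) : ℝ) := by
    exact_mod_cast Nat.choose_pos (by omega)
  have key := hyp2x2_key_nat x0 x1 x2 x3 j hj
  have keyR : ((x0 + x1).choose (x0 + j + 1) * (x2 + x3).choose (x2 - (j + 1)) * (x0 * x3) : ℝ) ≤
      ((x0 + x1).choose (x0 + j) * (x2 + x3).choose (x2 - j) * (x1 * x2) : ℝ) := by
    exact_mod_cast key
  have hxR : (0:ℝ) < (x0 : ℝ) * (x3 : ℝ) := by push_cast at hx03; exact hx03
  unfold hyp2x2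
  rw [show x0 + (j + 1) = x0 + j + 1 from rfl]
  have hs1 : x0 + x2 - (x0 + j + 1) = x2 - (j + 1) := by omega
  have hs2 : x0 + x2 - (x0 + j) = x2 - j := Nat.add_sub_add_left _ _ _
  rw [hs1, hs2]
  rw [div_mul_div_comm, div_le_div_iff₀ hD (mul_pos hD hxR)]
  push_cast
  push_cast at keyR
  nlinarith [mul_le_mul_of_nonneg_right keyR hD.le]

lemma hyp2x2_pow_bound (x0 x1 x2 x3 : ℕ) (hx03 : (0:ℝ) < (x0 * x3 : ℕ))
    (hr0 : (0:ℝ) ≤ (x1 * x2 : ℝ) / (x0 * x3 : ℝ)) :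
    ∀ j, j ≤ x2 → hyp2x2 x0 x1 x2 x3 (x0 + j) ≤
      hyp2x2 x0 x1 x2 x3 x0 * ((x1 * x2 : ℝ) / (x0 * x3 : ℝ)) ^ j := by
  intro j
  induction j with
  | zero => simp
  | succ j ih =>
    intro hj
    have h1 := hyp2x2_step x0 x1 x2 x3 j (by omega) hx03
    have h2 := ih (by omega)
    calc hyp2x2 x0 x1 x2 x3 (x0 + (j + 1))
        ≤ hyp2x2 x0 x1 x2 x3 (x0 + j) * ((x1 * x2 : ℝ) / (x0 * x3 : ℝ)) := h1
      _ ≤ hyp2x2 x0 x1 x2 x3 x0 * ((x1 * x2 : ℝ) / (x0 * x3 : ℝ)) ^ j *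
            ((x1 * x2 : ℝ) / (x0 * x3 : ℝ)) := by
          apply mul_le_mul_of_nonneg_right h2 hr0
      _ = hyp2x2 x0 x1 x2 x3 x0 * ((x1 * x2 : ℝ) / (x0 * x3 : ℝ)) ^ (j + 1) := by ring

theorem hyp2x2_tail_sum_lt (x0 x1 x2 x3 : ℕ)
    (h21 : x2 ≤ x1) (h03 : x0 ≤ x3)
    (hOR : 1 < (x0 * x3 : ℝ) / (x1 * x2 : ℝ)) :
    ∑ j ∈ Finset.Icc 1 x2, hyp2x2 x0 x1 x2 x3 (x0 + j) <
      hyp2x2 x0 x1 x2 x3 x0 / ((x0 * x3 : ℝ) / (x1 * x2 : ℝ) - 1) := by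
  -- positivity of the cell products
  have hx12 : (0:ℝ) < (x1 * x2 : ℝ) := by
    by_contra h
    push_neg at h
    have h0 : (x1 * x2 : ℝ) = 0 := le_antisymm h (by positivity)
    rw [h0, div_zero] at hOR
    linarith
  have hx03 : (0:ℝ) < (x0 * x3 : ℝ) := by
    have := (one_lt_div hx12).mp hOR
    linarith
  have hx03' : (0:ℝ) < ((x0 * x3 : ℕ) : ℝ) := by push_cast; exact hx03
  set r : ℝ := (x1 * x2 : ℝ) / (x0 * x3 : ℝ) with hr
  have hr0 : 0 < r := by positivity
  have hr1 : r < 1 := by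
    rw [hr, div_lt_one hx03]
    exact (one_lt_div hx12).mp hOR
  -- p(x0) > 0
  have hp0 : 0 < hyp2x2 x0 x1 x2 x3 x0 := by
    unfold hyp2x2
    rw [Nat.add_sub_cancel_left]
    have h1 : 0 < (x0 + x1).choose x0 := Nat.choose_pos (by omega)
    have h2 : 0 < (x2 + x3).choose x2 := Nat.choose_pos (by omega)
    have h3 : 0 < (x0 + x1 + x2 + x3).choose (x0 + x2) := Nat.choose_pos (by omega)
    have h1' : (0:ℝ) < ((x0 + x1).choose x0 : ℝ) := by exact_mod_cast h1
    have h2' : (0:ℝ) < ((x2 + x3).choose x2 : ℝ) := by exact_mod_cast h2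
    have h3' : (0:ℝ) < ((x0 + x1 + x2 + x3).choose (x0 + x2) : ℝ) := by exact_mod_cast h3
    positivity
  -- bound each term
  have hbound : ∑ j ∈ Finset.Icc 1 x2, hyp2x2 x0 x1 x2 x3 (x0 + j) ≤
      hyp2x2 x0 x1 x2 x3 x0 * ∑ j ∈ Finset.Icc 1 x2, r ^ j := by
    rw [Finset.mul_sum]
    apply Finset.sum_le_sum
    intro j hj
    rw [Finset.mem_Icc] at hj
    exact hyp2x2_pow_bound x0 x1 x2 x3 hx03' hr0.le j hj.2
  have hgeom := hyp2x2_geom_tail_lt hr0 hr1 x2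
  have hfin : hyp2x2 x0 x1 x2 x3 x0 * (r / (1 - r)) =
      hyp2x2 x0 x1 x2 x3 x0 / ((x0 * x3 : ℝ) / (x1 * x2 : ℝ) - 1) := by
    rw [hr]
    have hn1 := hx03.ne'
    have hn2 := hx12.ne'
    have hn3 : (x0 * x3 : ℝ) - x1 * x2 ≠ 0 := (sub_pos.mpr ((one_lt_div hx12).mp hOR)).ne'
    obtain ⟨ha0, ha3⟩ := mul_ne_zero_iff.mp hn1
    obtain ⟨ha1, ha2⟩ := mul_ne_zero_iff.mp hn2
    field_simp
  calc ∑ j ∈ Finset.Icc 1 x2, hyp2x2 x0 x1 x2 x3 (x0 + j)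
      ≤ hyp2x2 x0 x1 x2 x3 x0 * ∑ j ∈ Finset.Icc 1 x2, r ^ j := hbound
    _ < hyp2x2 x0 x1 x2 x3 x0 * (r / (1 - r)) := by
        apply mul_lt_mul_of_pos_left hgeom hp0
    _ = _ := hfin
end

section
/- Let $N$ be a positive integer and let $x_0, x_1, x_2, x_3$ be positive integers summing to $N$, with relative frequencies $X_k = x_k / N$. Define $MI$ as the mutual information of the $2\times 2$ table with cells $X_k$, and $P_H = \frac{(x_0+x_1)!(x_2+x_3)!(x_0+x_2)!(x_1+x_3)!}{N!\,x_0!x_1!x_2!x_3!}$. Then $-\log P_H - N \cdot MI < \frac{1}{2}\log(N+1) + 5.253$. -/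
/-- Mutual information of a 2×2 contingency table with cell probabilities
`X0 X1 X2 X3`, with the convention `0 * log 0 = 0`. -/
noncomputable def mi2x2 (X0 X1 X2 X3 : ℝ) : ℝ :=
  (X0 * Real.log X0 + X1 * Real.log X1 + X2 * Real.log X2 + X3 * Real.log X3)
    - (X0 + X1) * Real.log (X0 + X1) - (X2 + X3) * Real.log (X2 + X3)
    - (X0 + X2) * Real.log (X0 + X2) - (X1 + X3) * Real.log (X1 + X3)

/-- Hypergeometric probability of the observed 2×2 table with cell counts
`x0 x1 x2 x3` and total `N = x0 + x1 + x2 + x3`. -/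
noncomputable def hypProb (x0 x1 x2 x3 : ℕ) : ℝ :=
  ((x0 + x1).factorial * (x2 + x3).factorial * (x0 + x2).factorial *
      (x1 + x3).factorial : ℝ) /
    ((x0 + x1 + x2 + x3).factorial * x0.factorial * x1.factorial * x2.factorial *
      x3.factorial : ℝ)

open Real Stirling Nat Filter Topology

lemma aux_stirlingSeq_le_top (m : ℕ) : stirlingSeq (m + 1) ≤ Real.exp 1 / Real.sqrt 2 := by
  have h := stirlingSeq'_antitone (Nat.zero_le m)
  simpa [Function.comp, stirlingSeq_one] using h

lemma aux_sqrt_pi_le_stirlingSeq (m : ℕ) : Real.sqrt π ≤ stirlingSeq (m + 1) := by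
  have ht : Tendsto (stirlingSeq ∘ Nat.succ) atTop (𝓝 (Real.sqrt π)) :=
    tendsto_stirlingSeq_sqrt_pi.comp (tendsto_add_atTop_nat 1)
  exact stirlingSeq'_antitone.le_of_tendsto ht m

lemma aux_log_factorial_le (n : ℕ) (hn : 1 ≤ n) :
    Real.log (n ! : ℝ) ≤ n * Real.log n - n + (1/2) * Real.log n + 1 := by
  obtain ⟨m, rfl⟩ : ∃ m, n = m + 1 := ⟨n - 1, by omega⟩
  have hpos := stirlingSeq'_pos m
  have hlogs : Real.log (stirlingSeq (m + 1)) ≤ 1 - (1/2) * Real.log 2 := by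
    have := Real.log_le_log hpos (aux_stirlingSeq_le_top m)
    rw [Real.log_div (Real.exp_ne_zero 1) (by positivity), Real.log_exp,
      Real.log_sqrt (by norm_num)] at this; linarith
  have hf := log_stirlingSeq_formula (m + 1)
  have hnpos : (0:ℝ) < ((m:ℕ) + 1 : ℕ) := by positivity
  rw [Real.log_div (by positivity) (Real.exp_ne_zero 1), Real.log_exp,
    Real.log_mul (by norm_num) (by positivity)] at hf
  have : Real.log ((m + 1)! : ℝ) =
      Real.log (stirlingSeq (m + 1)) + 1/2 * (Real.log 2 + Real.log ((m:ℝ)+1))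
        + ((m:ℝ)+1) * (Real.log ((m:ℝ)+1) - 1) := by
    push_cast at hf ⊢
    linarith [hf]
  push_cast
  rw [this]
  nlinarith [hlogs]

lemma aux_le_log_factorial (n : ℕ) (hn : 1 ≤ n) :
    n * Real.log n - n + (1/2) * Real.log n ≤ Real.log (n ! : ℝ) := by
  obtain ⟨m, rfl⟩ : ∃ m, n = m + 1 := ⟨n - 1, by omega⟩
  have hpos := stirlingSeq'_pos m
  have hlogs : (0:ℝ) ≤ Real.log (stirlingSeq (m + 1)) := by
    have h1 : (1:ℝ) ≤ stirlingSeq (m+1) := by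
      refine le_trans ?_ (aux_sqrt_pi_le_stirlingSeq m)
      rw [show (1:ℝ) = Real.sqrt 1 by simp]
      exact Real.sqrt_le_sqrt (by linarith [Real.pi_gt_three])
    exact Real.log_nonneg h1
  have hf := log_stirlingSeq_formula (m + 1)
  rw [Real.log_div (by positivity) (Real.exp_ne_zero 1), Real.log_exp,
    Real.log_mul (by norm_num) (by positivity)] at hf
  have hl2 : (0:ℝ) ≤ Real.log 2 := Real.log_nonneg (by norm_num)
  push_cast at hf ⊢
  nlinarith [hf]

lemma aux_key4 {a b c d : ℝ} (ha : 0 < a) (hb : 0 < b) (hc : 0 < c) (hd : 0 < d) :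
    16 * (a*b*c*d) ≤ ((a+b)*(c+d)) * ((a+c)*(b+d)) := by
  have hP : 16 * (a*b*c*d) ≤ ((a+b)*(c+d))^2 := by
    nlinarith [sq_nonneg (a-b), sq_nonneg (c-d), mul_pos ha hb, mul_pos hc hd,
      sq_nonneg ((a-b)*(c+d)), sq_nonneg ((c-d)*(a+b)), mul_pos (mul_pos ha hb) (mul_pos hc hd)]
  have hQ : 16 * (a*b*c*d) ≤ ((a+c)*(b+d))^2 := by
    nlinarith [sq_nonneg (a-c), sq_nonneg (b-d), mul_pos ha hc, mul_pos hb hd,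
      sq_nonneg ((a-c)*(b+d)), sq_nonneg ((b-d)*(a+c)), mul_pos (mul_pos ha hc) (mul_pos hb hd)]
  have htpos : (0:ℝ) < 16 * (a*b*c*d) := by positivity
  have hPQpos : (0:ℝ) < ((a+b)*(c+d)) * ((a+c)*(b+d)) := by positivity
  nlinarith [mul_le_mul hP hQ htpos.le (sq_nonneg _)]

lemma aux_logmul4 (p q r s : ℝ) (hp : p ≠ 0) (hq : q ≠ 0) (hr : r ≠ 0) (hs : s ≠ 0) :
    Real.log (p*q*r*s) = Real.log p + Real.log q + Real.log r + Real.log s := by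
  rw [Real.log_mul (mul_ne_zero (mul_ne_zero hp hq) hr) hs,
    Real.log_mul (mul_ne_zero hp hq) hr, Real.log_mul hp hq]

lemma aux_logmul5 (p q r s t : ℝ) (hp : p ≠ 0) (hq : q ≠ 0) (hr : r ≠ 0) (hs : s ≠ 0)
    (ht : t ≠ 0) :
    Real.log (p*q*r*s*t) = Real.log p + Real.log q + Real.log r + Real.log s + Real.log t := by
  rw [Real.log_mul (mul_ne_zero (mul_ne_zero (mul_ne_zero hp hq) hr) hs) ht,
    aux_logmul4 p q r s hp hq hr hs]

lemma aux_mi_identity (a b c d : ℝ) (ha : 0 < a) (hb : 0 < b) (hc : 0 < c) (hd : 0 < d) :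
    (a+b+c+d) * mi2x2 (a/(a+b+c+d)) (b/(a+b+c+d)) (c/(a+b+c+d)) (d/(a+b+c+d)) =
      (a*Real.log a + b*Real.log b + c*Real.log c + d*Real.log d)
      - ((a+b)*Real.log (a+b) + (c+d)*Real.log (c+d) + (a+c)*Real.log (a+c)
          + (b+d)*Real.log (b+d))
      + (a+b+c+d)*Real.log (a+b+c+d) := by
  have hs : (0:ℝ) < a+b+c+d := by linarith
  unfold mi2x2
  rw [← add_div, ← add_div, ← add_div, ← add_div,
    Real.log_div ha.ne' hs.ne', Real.log_div hb.ne' hs.ne', Real.log_div hc.ne' hs.ne',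
    Real.log_div hd.ne' hs.ne',
    Real.log_div (by linarith : (0:ℝ) < a+b).ne' hs.ne',
    Real.log_div (by linarith : (0:ℝ) < c+d).ne' hs.ne',
    Real.log_div (by linarith : (0:ℝ) < a+c).ne' hs.ne',
    Real.log_div (by linarith : (0:ℝ) < b+d).ne' hs.ne']
  field_simp
  ring

theorem neg_log_hyp_sub_N_mi_upper (N : ℕ) (x0 x1 x2 x3 : ℕ)
    (h0 : 0 < x0) (h1 : 0 < x1) (h2 : 0 < x2) (h3 : 0 < x3)
    (hsum : x0 + x1 + x2 + x3 = N) :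
    -Real.log (hypProb x0 x1 x2 x3) -
        (N : ℝ) * mi2x2 ((x0 : ℝ) / N) ((x1 : ℝ) / N) ((x2 : ℝ) / N) ((x3 : ℝ) / N) <
      (1 / 2) * Real.log (N + 1) + 5.253 := by
  subst hsum
  have ha : (0:ℝ) < x0 := by exact_mod_cast h0
  have hb : (0:ℝ) < x1 := by exact_mod_cast h1
  have hc : (0:ℝ) < x2 := by exact_mod_cast h2
  have hd : (0:ℝ) < x3 := by exact_mod_cast h3
  have hfne : ∀ k : ℕ, ((k ! : ℕ) : ℝ) ≠ 0 := fun k =>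
    Nat.cast_ne_zero.mpr k.factorial_ne_zero
  -- log of hypProb
  have hlogP : Real.log (hypProb x0 x1 x2 x3) =
      (Real.log ((x0+x1)! : ℝ) + Real.log ((x2+x3)! : ℝ) + Real.log ((x0+x2)! : ℝ)
        + Real.log ((x1+x3)! : ℝ))
      - (Real.log ((x0+x1+x2+x3)! : ℝ) + Real.log (x0 ! : ℝ) + Real.log (x1 ! : ℝ)
        + Real.log (x2 ! : ℝ) + Real.log (x3 ! : ℝ)) := by
    rw [hypProb, Real.log_div (by positivity) (by positivity),
      aux_logmul4 _ _ _ _ (hfne _) (hfne _) (hfne _) (hfne _),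
      aux_logmul5 _ _ _ _ _ (hfne _) (hfne _) (hfne _) (hfne _) (hfne _)]
  -- mutual information identity
  have hmi := aux_mi_identity (x0:ℝ) (x1:ℝ) (x2:ℝ) (x3:ℝ) ha hb hc hd
  -- Stirling bounds
  have hbN := aux_log_factorial_le (x0+x1+x2+x3) (by omega)
  have hb0 := aux_log_factorial_le x0 (by omega)
  have hb1 := aux_log_factorial_le x1 (by omega)
  have hb2 := aux_log_factorial_le x2 (by omega)
  have hb3 := aux_log_factorial_le x3 (by omega)
  have hl01 := aux_le_log_factorial (x0+x1) (by omega)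
  have hl23 := aux_le_log_factorial (x2+x3) (by omega)
  have hl02 := aux_le_log_factorial (x0+x2) (by omega)
  have hl13 := aux_le_log_factorial (x1+x3) (by omega)
  -- key AM-GM inequality in log form
  have hkey : Real.log 16 + (Real.log (x0:ℝ) + Real.log (x1:ℝ) + Real.log (x2:ℝ)
        + Real.log (x3:ℝ)) ≤
      Real.log ((x0:ℝ)+x1) + Real.log ((x2:ℝ)+x3) + Real.log ((x0:ℝ)+x2)
        + Real.log ((x1:ℝ)+x3) := by
    have h := Real.log_le_log (by positivity) (aux_key4 ha hb hc hd)
    rw [Real.log_mul (by norm_num) (by positivity),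
      aux_logmul4 _ _ _ _ ha.ne' hb.ne' hc.ne' hd.ne',
      Real.log_mul (by positivity) (by positivity),
      Real.log_mul (by positivity) (by positivity),
      Real.log_mul (by positivity) (by positivity)] at h
    linarith
  have hl16 : (0:ℝ) ≤ Real.log 16 := Real.log_nonneg (by norm_num)
  have hmono : Real.log ((x0:ℝ)+x1+x2+x3) ≤ Real.log ((x0:ℝ)+x1+x2+x3+1) :=
    Real.log_le_log (by linarith) (by linarith)
  rw [hlogP]
  push_cast at hmi hbN hb0 hb1 hb2 hb3 hl01 hl23 hl02 hl13 ⊢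
  linarith [hmi]
end

section
/- Let $N$ be a positive integer and let $x_0, x_1, x_2, x_3$ be positive integers summing to $N$, with $X_k = x_k/N$, $MI$ the mutual information of the table, and $P_H$ the hypergeometric probability of the table. Then $-\log P_H - N\cdot MI > -\frac{3}{2}\log(N+1) + \frac{1}{12(N+1)} - \frac{1}{2N} - 0.735$. -/
open Real

noncomputable def Sf (n : ℕ) : ℝ := Real.log n.factorial - n * Real.log n + n

lemma Sf_eq {n : ℕ} (hn : 0 < n) :
    Sf n = Real.log (Stirling.stirlingSeq n) + (1/2) * Real.log 2 + (1/2) * Real.log n := by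
  have h := Stirling.log_stirlingSeq_formula n
  have hn' : (0:ℝ) < (n:ℝ) := by exact_mod_cast hn
  rw [Real.log_div hn'.ne' (Real.exp_ne_zero 1), Real.log_exp,
    Real.log_mul (by norm_num) hn'.ne'] at h
  unfold Sf
  rw [h]; ring

lemma sqrtpi_le {n : ℕ} (hn : 0 < n) : Real.sqrt π ≤ Stirling.stirlingSeq n := by
  have ht : Filter.Tendsto (Stirling.stirlingSeq ∘ Nat.succ) Filter.atTop (nhds (Real.sqrt π)) :=
    Stirling.tendsto_stirlingSeq_sqrt_pi.comp (Filter.tendsto_add_atTop_nat 1)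
  have := Stirling.log_stirlingSeq'_antitone
  have h := Stirling.stirlingSeq'_antitone.le_of_tendsto ht (n - 1)
  have e : Nat.succ (n-1) = n := Nat.succ_pred_eq_of_pos hn
  simp only [Function.comp_apply, e] at h
  exact h

lemma stir_le {n : ℕ} (hn : 0 < n) : Stirling.stirlingSeq n ≤ Real.exp 1 / Real.sqrt 2 := by
  have h := Stirling.stirlingSeq'_antitone (Nat.zero_le (n - 1))
  simp only [Function.comp, Nat.succ_eq_add_one, Nat.zero_add, Nat.sub_add_cancel hn] at h
  calc Stirling.stirlingSeq n ≤ Stirling.stirlingSeq 1 := h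
    _ = Real.exp 1 / Real.sqrt 2 := Stirling.stirlingSeq_one

lemma Sf_lower {n : ℕ} (hn : 0 < n) : Real.log 2 + (1/2) * Real.log n ≤ Sf n := by
  rw [Sf_eq hn]
  have h1 : Real.sqrt π ≤ Stirling.stirlingSeq n := sqrtpi_le hn
  have h2 : Real.log (Real.sqrt π) ≤ Real.log (Stirling.stirlingSeq n) :=
    Real.log_le_log (Real.sqrt_pos.mpr Real.pi_pos) h1
  rw [Real.log_sqrt Real.pi_pos.le] at h2
  have h3 : Real.log 2 ≤ Real.log π := Real.log_le_log two_pos Real.two_le_pi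
  linarith

lemma Sf_upper {n : ℕ} (hn : 0 < n) : Sf n ≤ 1 + (1/2) * Real.log n := by
  rw [Sf_eq hn]
  have h0 : 0 < Stirling.stirlingSeq n := by
    have := Stirling.stirlingSeq'_pos (n-1)
    rwa [Nat.sub_add_cancel hn] at this
  have h2 : Real.log (Stirling.stirlingSeq n) ≤ Real.log (Real.exp 1 / Real.sqrt 2) :=
    Real.log_le_log h0 (stir_le hn)
  rw [Real.log_div (Real.exp_ne_zero 1) (by positivity), Real.log_exp,
    Real.log_sqrt (by norm_num)] at h2
  linarith

lemma mi_eval (a b c d : ℝ) (ha : 0 < a) (hb : 0 < b) (hc : 0 < c) (hd : 0 < d) :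
    (a+b+c+d) * mi2x2 (a/(a+b+c+d)) (b/(a+b+c+d)) (c/(a+b+c+d)) (d/(a+b+c+d)) =
      a * Real.log a + b * Real.log b + c * Real.log c + d * Real.log d
      - (a+b) * Real.log (a+b) - (c+d) * Real.log (c+d)
      - (a+c) * Real.log (a+c) - (b+d) * Real.log (b+d)
      + (a+b+c+d) * Real.log (a+b+c+d) := by
  have hn : (0:ℝ) < a+b+c+d := by linarith
  unfold mi2x2
  simp only [← add_div]
  rw [Real.log_div ha.ne' hn.ne', Real.log_div hb.ne' hn.ne', Real.log_div hc.ne' hn.ne',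
    Real.log_div hd.ne' hn.ne',
    Real.log_div (by positivity : a+b ≠ 0) hn.ne', Real.log_div (by positivity : c+d ≠ 0) hn.ne',
    Real.log_div (by positivity : a+c ≠ 0) hn.ne', Real.log_div (by positivity : b+d ≠ 0) hn.ne']
  field_simp
  ring

lemma hyp_eval (x0 x1 x2 x3 : ℕ) :
    Real.log (hypProb x0 x1 x2 x3) =
      Real.log (x0+x1).factorial + Real.log (x2+x3).factorial
      + Real.log (x0+x2).factorial + Real.log (x1+x3).factorial
      - Real.log (x0+x1+x2+x3).factorial - Real.log x0.factorial
      - Real.log x1.factorial - Real.log x2.factorial - Real.log x3.factorial := by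
  have f : ∀ m : ℕ, ((m.factorial : ℝ)) ≠ 0 := fun m => by
    exact_mod_cast m.factorial_ne_zero
  unfold hypProb
  rw [Real.log_div (by positivity) (by positivity),
    Real.log_mul (by positivity) (f _), Real.log_mul (by positivity) (f _),
    Real.log_mul (f _) (f _),
    Real.log_mul (by positivity) (f _), Real.log_mul (by positivity) (f _),
    Real.log_mul (by positivity) (f _), Real.log_mul (f _) (f _)]
  ring

set_option maxHeartbeats 2000000 in
theorem neg_log_hyp_sub_N_mi_lower (N : ℕ) (x0 x1 x2 x3 : ℕ)
    (h0 : 0 < x0) (h1 : 0 < x1) (h2 : 0 < x2) (h3 : 0 < x3)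
    (hsum : x0 + x1 + x2 + x3 = N) :
    -Real.log (hypProb x0 x1 x2 x3) -
        (N : ℝ) * mi2x2 ((x0 : ℝ) / N) ((x1 : ℝ) / N) ((x2 : ℝ) / N) ((x3 : ℝ) / N) >
      -(3 / 2) * Real.log (N + 1) + 1 / (12 * ((N : ℝ) + 1)) - 1 / (2 * N) - 0.735 := by
  subst hsum
  have ha : (0:ℝ) < (x0:ℝ) := by exact_mod_cast h0
  have hb : (0:ℝ) < (x1:ℝ) := by exact_mod_cast h1
  have hc : (0:ℝ) < (x2:ℝ) := by exact_mod_cast h2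
  have hd : (0:ℝ) < (x3:ℝ) := by exact_mod_cast h3
  have hcast : ((x0+x1+x2+x3 : ℕ) : ℝ) = (x0:ℝ) + (x1:ℝ) + (x2:ℝ) + (x3:ℝ) := by
    push_cast; ring
  rw [hcast, hyp_eval, mi_eval _ _ _ _ ha hb hc hd]
  -- Sf bounds
  have e0 : Real.log 2 + (1/2) * Real.log ((x0+x1+x2+x3 : ℕ) : ℝ) ≤ Sf (x0+x1+x2+x3) :=
    Sf_lower (by positivity)
  have e1 : Real.log 2 + (1/2) * Real.log ((x0:ℕ) : ℝ) ≤ Sf x0 := Sf_lower h0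
  have e2 : Real.log 2 + (1/2) * Real.log ((x1:ℕ) : ℝ) ≤ Sf x1 := Sf_lower h1
  have e3 : Real.log 2 + (1/2) * Real.log ((x2:ℕ) : ℝ) ≤ Sf x2 := Sf_lower h2
  have e4 : Real.log 2 + (1/2) * Real.log ((x3:ℕ) : ℝ) ≤ Sf x3 := Sf_lower h3
  have u1 : Sf (x0+x1) ≤ 1 + (1/2) * Real.log ((x0+x1 : ℕ) : ℝ) := Sf_upper (by positivity)
  have u2 : Sf (x2+x3) ≤ 1 + (1/2) * Real.log ((x2+x3 : ℕ) : ℝ) := Sf_upper (by positivity)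
  have u3 : Sf (x0+x2) ≤ 1 + (1/2) * Real.log ((x0+x2 : ℕ) : ℝ) := Sf_upper (by positivity)
  have u4 : Sf (x1+x3) ≤ 1 + (1/2) * Real.log ((x1+x3 : ℕ) : ℝ) := Sf_upper (by positivity)
  simp only [Sf] at e0 e1 e2 e3 e4 u1 u2 u3 u4
  push_cast at e0 e1 e2 e3 e4 u1 u2 u3 u4 ⊢
  -- log nonneg for cells
  have l1 : 0 ≤ Real.log (x0:ℝ) := Real.log_nonneg (by exact_mod_cast h0)
  have l2 : 0 ≤ Real.log (x1:ℝ) := Real.log_nonneg (by exact_mod_cast h1)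
  have l3 : 0 ≤ Real.log (x2:ℝ) := Real.log_nonneg (by exact_mod_cast h2)
  have l4 : 0 ≤ Real.log (x3:ℝ) := Real.log_nonneg (by exact_mod_cast h3)
  -- marginal product bounds
  set n : ℝ := (x0:ℝ) + x1 + x2 + x3 with hn
  have hnpos : 0 < n := by positivity
  have hrow : Real.log ((x0:ℝ)+x1) + Real.log ((x2:ℝ)+x3) ≤ 2*Real.log n - 2*Real.log 2 := by
    have hm : ((x0:ℝ)+x1) * ((x2:ℝ)+x3) ≤ (n/2)^2 := by
      nlinarith [sq_nonneg (((x0:ℝ)+x1) - ((x2:ℝ)+x3))]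
    have := Real.log_le_log (by positivity) hm
    rw [Real.log_mul (by positivity) (by positivity)] at this
    rw [Real.log_pow, Real.log_div hnpos.ne' (by norm_num)] at this
    push_cast at this
    linarith
  have hcol : Real.log ((x0:ℝ)+x2) + Real.log ((x1:ℝ)+x3) ≤ 2*Real.log n - 2*Real.log 2 := by
    have hm : ((x0:ℝ)+x2) * ((x1:ℝ)+x3) ≤ (n/2)^2 := by
      nlinarith [sq_nonneg (((x0:ℝ)+x2) - ((x1:ℝ)+x3))]
    have := Real.log_le_log (by positivity) hm
    rw [Real.log_mul (by positivity) (by positivity)] at this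
    rw [Real.log_pow, Real.log_div hnpos.ne' (by norm_num)] at this
    push_cast at this
    linarith
  have hlogn : Real.log n ≤ Real.log (n + 1) := Real.log_le_log hnpos (by linarith)
  have hlog2 : (0.6931471803 : ℝ) < Real.log 2 := Real.log_two_gt_d9
  have hfrac : 1 / (12 * (n + 1)) ≤ 1/12 := by
    rw [div_le_div_iff₀ (by positivity) (by norm_num)]
    linarith
  have hpos2 : 0 < 1 / (2 * n) := by positivity
  linarith
end

section
/- Let $(x^{(N)}_k)$ be a sequence of positive $2\times 2$ integer tables with total $N$, relative frequencies converging to positive probabilities $X_k$ with $X_1 X_2 < X_0 X_3$ (so the limiting odds ratio $OR > 1$). Then $-\frac{1}{N}\log P_F^{(N)} \to MI$ as $N \to \infty$, where $P_F^{(N)}$ is Fisher's exact test $p$-value and $MI$ is the mutual information of the limiting distribution. -/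
open Filter

/-- Fisher's exact test p-value: the sum of the probabilities of all tables with
the same margins (parametrized by the top-left cell `k`) whose probability is at
most that of the observed table. -/
noncomputable def fisher2x2 (x0 x1 x2 x3 : ℕ) : ℝ :=
  ∑ k ∈ Finset.range (x0 + x1 + x2 + x3 + 1),
    if hyp2x2 x0 x1 x2 x3 k ≤ hyp2x2 x0 x1 x2 x3 x0 then hyp2x2 x0 x1 x2 x3 k else 0


private lemma log_stirlingSeq_bound :
    ∃ M : ℝ, ∀ n : ℕ, 1 ≤ n → |Real.log (Stirling.stirlingSeq n)| ≤ M := by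
  obtain ⟨c, hc⟩ : ∃ c : ℝ, ∀ n : ℕ, c ≤ Real.log (Stirling.stirlingSeq (n + 1)) :=
    ⟨_, Stirling.log_stirlingSeq_bounded_by_constant⟩
  refine ⟨max |c| |Real.log (Stirling.stirlingSeq 1)|, fun n hn => ?_⟩
  obtain ⟨m, rfl⟩ : ∃ m, n = m + 1 := ⟨n - 1, by omega⟩
  have h1 := hc m
  have h2 : Real.log (Stirling.stirlingSeq (m + 1)) ≤ Real.log (Stirling.stirlingSeq (0 + 1)) :=
    Stirling.log_stirlingSeq'_antitone (Nat.zero_le m)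
  simp only [Nat.zero_add] at h2
  rw [abs_le]
  constructor
  · have := neg_abs_le c
    have := le_max_left |c| |Real.log (Stirling.stirlingSeq 1)|
    linarith
  · have := le_abs_self (Real.log (Stirling.stirlingSeq 1))
    have := le_max_right |c| |Real.log (Stirling.stirlingSeq 1)|
    linarith

private lemma log_factorial_eq (n : ℕ) (hn : 1 ≤ n) :
    Real.log n.factorial =
      n * Real.log n - n
        + (Real.log (Real.sqrt (2 * n)) + Real.log (Stirling.stirlingSeq n)) := by
  have hn' : (0:ℝ) < n := by exact_mod_cast hn
  have hs : 0 < Stirling.stirlingSeq n := by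
    obtain ⟨m, rfl⟩ : ∃ m, n = m + 1 := ⟨n - 1, by omega⟩
    exact Stirling.stirlingSeq'_pos m
  have hsq : (0:ℝ) < Real.sqrt (2 * n) := Real.sqrt_pos.mpr (by positivity)
  have hpow : (0:ℝ) < ((n:ℝ) / Real.exp 1) ^ n := by positivity
  have hfact : (n.factorial : ℝ)
      = Stirling.stirlingSeq n * (Real.sqrt (2 * n) * ((n:ℝ) / Real.exp 1) ^ n) := by
    rw [Stirling.stirlingSeq]
    field_simp
  rw [hfact, Real.log_mul (ne_of_gt hs) (by positivity),
    Real.log_mul (ne_of_gt hsq) (ne_of_gt hpow), Real.log_pow,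
    Real.log_div (ne_of_gt hn') (Real.exp_ne_zero 1), Real.log_exp]
  ring

private lemma tendsto_log_affine_div (a b : ℝ) (ha : 0 < a) (hb : 0 ≤ b) :
    Tendsto (fun N : ℕ => Real.log (a * N + b) / N) atTop (nhds 0) := by
  have h1 : Tendsto (fun x : ℝ => Real.log x / x) atTop (nhds 0) := by
    have := Real.isLittleO_log_id_atTop.tendsto_div_nhds_zero
    simpa using this
  have h2 : Tendsto (fun N : ℕ => a * N + b) atTop atTop :=
    tendsto_atTop_add_const_right _ b (tendsto_natCast_atTop_atTop.const_mul_atTop ha)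
  have h3 : Tendsto (fun N : ℕ => Real.log (a * N + b) / (a * N + b)) atTop (nhds 0) :=
    h1.comp h2
  have h4 : Tendsto (fun N : ℕ => (a * N + b) / N) atTop (nhds a) := by
    have : Tendsto (fun N : ℕ => a + b * (1 / N)) atTop (nhds (a + b * 0)) :=
      tendsto_const_nhds.add (tendsto_const_nhds.mul tendsto_one_div_atTop_nhds_zero_nat)
    rw [mul_zero, add_zero] at this
    apply this.congr'
    filter_upwards [eventually_ge_atTop 1] with N hN
    have hN' : (N:ℝ) ≠ 0 := by positivity
    field_simp
  have h5 := h3.mul h4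
  rw [zero_mul] at h5
  apply h5.congr'
  filter_upwards [eventually_ge_atTop 1] with N hN
  have hN' : (N:ℝ) ≠ 0 := by positivity
  have hab : a * N + b ≠ 0 := by positivity
  field_simp

private lemma stirling_lim (c : ℕ → ℕ) (C : ℝ) (hC : 0 < C)
    (hc : Tendsto (fun N => (c N : ℝ) / N) atTop (nhds C))
    (hle : ∀ᶠ N in atTop, c N ≤ N) :
    Tendsto (fun N => Real.log (c N).factorial / N - (c N : ℝ) / N * Real.log N)
      atTop (nhds (C * Real.log C - C)) := by
  obtain ⟨M, hM⟩ := log_stirlingSeq_bound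
  have hcpos : ∀ᶠ N in atTop, 1 ≤ c N := by
    have h := hc.eventually (eventually_gt_nhds hC : ∀ᶠ x in nhds C, 0 < x)
    filter_upwards [h] with N hN
    by_contra hcon
    push_neg at hcon
    interval_cases h : c N
    · simp at hN
  -- main part
  have part1 : Tendsto (fun N => (c N : ℝ) / N * Real.log ((c N : ℝ) / N) - (c N : ℝ) / N)
      atTop (nhds (C * Real.log C - C)) := by
    exact (hc.mul ((Real.continuousAt_log hC.ne').tendsto.comp hc)).sub hc
  have part2 : Tendsto (fun N =>
      (Real.log (Real.sqrt (2 * c N)) + Real.log (Stirling.stirlingSeq (c N))) / N)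
      atTop (nhds 0) := by
    apply squeeze_zero_norm' (a := fun N : ℕ => (Real.log (2 * N) + M) / N)
    · filter_upwards [hcpos, hle, eventually_ge_atTop 1] with N h1 h2 h3
      have hN' : (0:ℝ) < N := by exact_mod_cast h3
      have hc' : (1:ℝ) ≤ 2 * c N := by
        have : (1:ℝ) ≤ (c N : ℝ) := by exact_mod_cast h1
        linarith
      have e1 : Real.log (Real.sqrt (2 * (c N : ℝ))) = Real.log (2 * c N) / 2 :=
        Real.log_sqrt (by positivity)
      have e2 : (0:ℝ) ≤ Real.log (2 * c N) := Real.log_nonneg hc'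
      have e3 : Real.log (2 * (c N : ℝ)) ≤ Real.log (2 * N) := by
        apply Real.log_le_log (by linarith)
        have : (c N : ℝ) ≤ N := by exact_mod_cast h2
        linarith
      have e4 : |Real.log (Stirling.stirlingSeq (c N))| ≤ M := hM _ h1
      rw [Real.norm_eq_abs, abs_div, abs_of_pos hN', div_le_div_iff_of_pos_right hN']
      calc |Real.log (Real.sqrt (2 * (c N : ℝ))) + Real.log (Stirling.stirlingSeq (c N))|
          ≤ |Real.log (Real.sqrt (2 * (c N : ℝ)))| + |Real.log (Stirling.stirlingSeq (c N))| :=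
            abs_add_le _ _
        _ ≤ Real.log (2 * N) + M := by
            rw [e1, abs_of_nonneg (by linarith)]
            linarith
    · have hA := tendsto_log_affine_div 2 0 (by norm_num) le_rfl
      simp only [add_zero] at hA
      have := hA.add (tendsto_const_div_atTop_nhds_zero_nat M)
      rw [add_zero] at this
      apply this.congr
      intro N
      ring
  have hcomb := part1.add part2
  rw [add_zero] at hcomb
  apply hcomb.congr'
  filter_upwards [hcpos, eventually_ge_atTop 1] with N h1 h3
  have hN' : (0:ℝ) < N := by exact_mod_cast h3
  have hcN : (0:ℝ) < c N := by exact_mod_cast h1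
  rw [log_factorial_eq (c N) h1, Real.log_div (ne_of_gt hcN) (ne_of_gt hN')]
  push_cast
  ring

private lemma log_choose (m k : ℕ) (h : k ≤ m) :
    Real.log (m.choose k) =
      Real.log m.factorial - Real.log k.factorial - Real.log (m - k).factorial := by
  rw [Nat.cast_choose ℝ h, Real.log_div (by positivity) (by positivity),
    Real.log_mul (by positivity) (by positivity)]
  ring

private lemma log_hyp_obs (a b c d : ℕ) :
    Real.log (hyp2x2 a b c d a) =
      (Real.log (a + b).factorial - Real.log a.factorial - Real.log b.factorial)
      + (Real.log (c + d).factorial - Real.log c.factorial - Real.log d.factorial)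
      - (Real.log (a + b + c + d).factorial - Real.log (a + c).factorial
          - Real.log (b + d).factorial) := by
  have e1 : a + c - a = c := by omega
  have h1 : a ≤ a + b := Nat.le_add_right _ _
  have h2 : c ≤ c + d := Nat.le_add_right _ _
  have h3 : a + c ≤ a + b + c + d := by omega
  have hc1 : (0:ℝ) < ((a + b).choose a : ℝ) := by exact_mod_cast Nat.choose_pos h1
  have hc2 : (0:ℝ) < ((c + d).choose c : ℝ) := by exact_mod_cast Nat.choose_pos h2
  have hc3 : (0:ℝ) < ((a + b + c + d).choose (a + c) : ℝ) := by
    exact_mod_cast Nat.choose_pos h3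
  unfold hyp2x2
  rw [e1, Real.log_div (by positivity) (ne_of_gt hc3),
    Real.log_mul (ne_of_gt hc1) (ne_of_gt hc2),
    log_choose _ _ h1, log_choose _ _ h2, log_choose _ _ h3,
    show a + b - a = b from by omega, show c + d - c = d from by omega,
    show a + b + c + d - (a + c) = b + d from by omega]


theorem neg_inv_N_log_fisher_tendsto_mi
    (x0 x1 x2 x3 : ℕ → ℕ)
    (hsum : ∀ᶠ N in atTop, x0 N + x1 N + x2 N + x3 N = N)
    (hpos : ∀ᶠ N in atTop, 0 < x0 N ∧ 0 < x1 N ∧ 0 < x2 N ∧ 0 < x3 N)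
    (X0 X1 X2 X3 : ℝ)
    (hX0 : 0 < X0) (hX1 : 0 < X1) (hX2 : 0 < X2) (hX3 : 0 < X3)
    (hXsum : X0 + X1 + X2 + X3 = 1)
    (hOR : X1 * X2 < X0 * X3)
    (h0 : Tendsto (fun N => (x0 N : ℝ) / N) atTop (nhds X0))
    (h1 : Tendsto (fun N => (x1 N : ℝ) / N) atTop (nhds X1))
    (h2 : Tendsto (fun N => (x2 N : ℝ) / N) atTop (nhds X2))
    (h3 : Tendsto (fun N => (x3 N : ℝ) / N) atTop (nhds X3)) :
    Tendsto (fun N : ℕ => -(1 / (N : ℝ)) * Real.log (fisher2x2 (x0 N) (x1 N) (x2 N) (x3 N)))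
      atTop (nhds (mi2x2 X0 X1 X2 X3)) := by
  -- ratio limits for the marginal sequences
  have ratio2 : ∀ (u v : ℕ → ℕ) (U V : ℝ),
      Tendsto (fun N => (u N : ℝ) / N) atTop (nhds U) →
      Tendsto (fun N => (v N : ℝ) / N) atTop (nhds V) →
      Tendsto (fun N => ((u N + v N : ℕ) : ℝ) / N) atTop (nhds (U + V)) := by
    intro u v U V hu hv
    apply (hu.add hv).congr
    intro N
    push_cast
    ring
  have hle : ∀ (u : ℕ → ℕ), (∀ᶠ N in atTop, u N ≤ x0 N + x1 N + x2 N + x3 N) →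
      ∀ᶠ N in atTop, u N ≤ N := by
    intro u hu
    filter_upwards [hsum, hu] with N hN h
    omega
  have G0 := stirling_lim x0 X0 hX0 h0 (hle x0 (Eventually.of_forall fun N => by omega))
  have G1 := stirling_lim x1 X1 hX1 h1 (hle x1 (Eventually.of_forall fun N => by omega))
  have G2 := stirling_lim x2 X2 hX2 h2 (hle x2 (Eventually.of_forall fun N => by omega))
  have G3 := stirling_lim x3 X3 hX3 h3 (hle x3 (Eventually.of_forall fun N => by omega))
  have Gr1 := stirling_lim (fun N => x0 N + x1 N) (X0 + X1) (by linarith)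
    (ratio2 _ _ _ _ h0 h1) (hle _ (Eventually.of_forall fun N => by omega))
  have Gr2 := stirling_lim (fun N => x2 N + x3 N) (X2 + X3) (by linarith)
    (ratio2 _ _ _ _ h2 h3) (hle _ (Eventually.of_forall fun N => by omega))
  have Gc1 := stirling_lim (fun N => x0 N + x2 N) (X0 + X2) (by linarith)
    (ratio2 _ _ _ _ h0 h2) (hle _ (Eventually.of_forall fun N => by omega))
  have Gc2 := stirling_lim (fun N => x1 N + x3 N) (X1 + X3) (by linarith)
    (ratio2 _ _ _ _ h1 h3) (hle _ (Eventually.of_forall fun N => by omega))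
  have GN : Tendsto (fun N : ℕ =>
      Real.log (Nat.factorial N) / N - (N : ℝ) / N * Real.log N)
      atTop (nhds (1 * Real.log 1 - 1)) := by
    apply stirling_lim (fun N => N) 1 one_pos _ (Eventually.of_forall fun N => le_rfl)
    apply tendsto_const_nhds.congr'
    filter_upwards [eventually_ge_atTop 1] with N hN
    have : (N:ℝ) ≠ 0 := by positivity
    field_simp
  -- the combined limit for -(1/N) log P_H
  have combo := ((((((((Gr1.sub G0).sub G1).add Gr2).sub G2).sub G3).sub GN).add Gc1).add Gc2).neg
  have hval : -((X0 + X1) * Real.log (X0 + X1) - (X0 + X1) - (X0 * Real.log X0 - X0)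
      - (X1 * Real.log X1 - X1) + ((X2 + X3) * Real.log (X2 + X3) - (X2 + X3))
      - (X2 * Real.log X2 - X2) - (X3 * Real.log X3 - X3) - (1 * Real.log 1 - 1)
      + ((X0 + X2) * Real.log (X0 + X2) - (X0 + X2))
      + ((X1 + X3) * Real.log (X1 + X3) - (X1 + X3))) = mi2x2 X0 X1 X2 X3 := by
    simp only [mi2x2, Real.log_one]
    linear_combination hXsum
  rw [hval] at combo
  have key : Tendsto (fun N : ℕ =>
      -(1 / (N : ℝ)) * Real.log (hyp2x2 (x0 N) (x1 N) (x2 N) (x3 N) (x0 N)))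
      atTop (nhds (mi2x2 X0 X1 X2 X3)) := by
    apply combo.congr'
    filter_upwards [hsum, eventually_ge_atTop 1] with N hN hN1
    have hNr : (0:ℝ) < N := by exact_mod_cast hN1
    have hcast : (x0 N : ℝ) + x1 N + x2 N + x3 N = N := by exact_mod_cast hN
    rw [log_hyp_obs, show x0 N + x1 N + x2 N + x3 N = N from hN]
    push_cast
    linear_combination (Real.log (N:ℝ) / N) * hcast
  -- sandwich P_H <= P_F <= (N+1) P_H and squeeze
  have hlogN1 : Tendsto (fun N : ℕ => Real.log ((N:ℝ) + 1) / N) atTop (nhds 0) := by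
    have := tendsto_log_affine_div 1 1 one_pos zero_le_one
    simpa using this
  have hfish : ∀ᶠ N in atTop,
      0 < hyp2x2 (x0 N) (x1 N) (x2 N) (x3 N) (x0 N) ∧
      hyp2x2 (x0 N) (x1 N) (x2 N) (x3 N) (x0 N) ≤ fisher2x2 (x0 N) (x1 N) (x2 N) (x3 N) ∧
      fisher2x2 (x0 N) (x1 N) (x2 N) (x3 N)
        ≤ ((N:ℝ) + 1) * hyp2x2 (x0 N) (x1 N) (x2 N) (x3 N) (x0 N) := by
    filter_upwards [hsum] with N hN
    set a := x0 N with ha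
    set b := x1 N with hb
    set c := x2 N with hc
    set d := x3 N with hd
    have hpos0 : 0 < hyp2x2 a b c d a := by
      unfold hyp2x2
      have k1 : (0:ℝ) < ((a+b).choose a : ℝ) := by
        exact_mod_cast Nat.choose_pos (Nat.le_add_right _ _)
      have k2 : (0:ℝ) < ((c+d).choose (a + c - a) : ℝ) := by
        exact_mod_cast Nat.choose_pos (by omega)
      have k3 : (0:ℝ) < ((a+b+c+d).choose (a+c) : ℝ) := by
        exact_mod_cast Nat.choose_pos (by omega)
      exact div_pos (mul_pos k1 k2) k3
    have hypnn : ∀ k, 0 ≤ hyp2x2 a b c d k := by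
      intro k
      unfold hyp2x2
      positivity
    refine ⟨hpos0, ?_, ?_⟩
    · unfold fisher2x2
      have hmem : a ∈ Finset.range (a+b+c+d+1) := by
        simp only [Finset.mem_range]
        omega
      calc hyp2x2 a b c d a
          = if hyp2x2 a b c d a ≤ hyp2x2 a b c d a then hyp2x2 a b c d a else 0 := by
            rw [if_pos le_rfl]
        _ ≤ ∑ k ∈ Finset.range (a+b+c+d+1),
              if hyp2x2 a b c d k ≤ hyp2x2 a b c d a then hyp2x2 a b c d k else 0 := by
            apply Finset.single_le_sum
              (f := fun k => if hyp2x2 a b c d k ≤ hyp2x2 a b c d a then hyp2x2 a b c d k else 0)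
              _ hmem
            intro i _
            split
            · exact hypnn i
            · exact le_rfl
    · unfold fisher2x2
      have hb2 : ∀ k ∈ Finset.range (a+b+c+d+1),
          (if hyp2x2 a b c d k ≤ hyp2x2 a b c d a then hyp2x2 a b c d k else 0)
            ≤ hyp2x2 a b c d a := by
        intro k _
        split
        · assumption
        · exact le_of_lt hpos0
      have := Finset.sum_le_card_nsmul (Finset.range (a+b+c+d+1))
        (fun k => if hyp2x2 a b c d k ≤ hyp2x2 a b c d a then hyp2x2 a b c d k else 0)
        (hyp2x2 a b c d a) hb2
      rw [Finset.card_range, nsmul_eq_mul] at this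
      calc (∑ k ∈ Finset.range (a+b+c+d+1),
              if hyp2x2 a b c d k ≤ hyp2x2 a b c d a then hyp2x2 a b c d k else 0)
          ≤ ((a+b+c+d+1 : ℕ) : ℝ) * hyp2x2 a b c d a := this
        _ = ((N:ℝ) + 1) * hyp2x2 a b c d a := by
            rw [hN]
            push_cast
            ring
  have lower : Tendsto (fun N : ℕ =>
      -(1/(N:ℝ)) * Real.log (hyp2x2 (x0 N) (x1 N) (x2 N) (x3 N) (x0 N))
        - Real.log ((N:ℝ)+1)/N)
      atTop (nhds (mi2x2 X0 X1 X2 X3)) := by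
    have := key.sub hlogN1
    rwa [sub_zero] at this
  apply tendsto_of_tendsto_of_tendsto_of_le_of_le' lower key
  · filter_upwards [hfish, eventually_ge_atTop 1] with N hf hN1
    obtain ⟨hp0, hlo, hhi⟩ := hf
    have hNr : (0:ℝ) < N := by exact_mod_cast hN1
    have hfpos : 0 < fisher2x2 (x0 N) (x1 N) (x2 N) (x3 N) := lt_of_lt_of_le hp0 hlo
    have l2 : Real.log (fisher2x2 (x0 N) (x1 N) (x2 N) (x3 N))
        ≤ Real.log ((N:ℝ)+1) + Real.log (hyp2x2 (x0 N) (x1 N) (x2 N) (x3 N) (x0 N)) := by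
      rw [← Real.log_mul (by positivity) (ne_of_gt hp0)]
      exact Real.log_le_log hfpos hhi
    have k1 : (1/(N:ℝ)) * Real.log (fisher2x2 (x0 N) (x1 N) (x2 N) (x3 N))
        ≤ (1/(N:ℝ)) * (Real.log ((N:ℝ)+1)
            + Real.log (hyp2x2 (x0 N) (x1 N) (x2 N) (x3 N) (x0 N))) :=
      mul_le_mul_of_nonneg_left l2 (by positivity)
    have e : (1/(N:ℝ)) * (Real.log ((N:ℝ)+1)
        + Real.log (hyp2x2 (x0 N) (x1 N) (x2 N) (x3 N) (x0 N)))
        = (1/(N:ℝ)) * Real.log (hyp2x2 (x0 N) (x1 N) (x2 N) (x3 N) (x0 N))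
          + Real.log ((N:ℝ)+1)/N := by
      ring
    linarith
  · filter_upwards [hfish, eventually_ge_atTop 1] with N hf hN1
    obtain ⟨hp0, hlo, hhi⟩ := hf
    have hNr : (0:ℝ) < N := by exact_mod_cast hN1
    have l1 : Real.log (hyp2x2 (x0 N) (x1 N) (x2 N) (x3 N) (x0 N))
        ≤ Real.log (fisher2x2 (x0 N) (x1 N) (x2 N) (x3 N)) :=
      Real.log_le_log hp0 hlo
    have k2 := mul_le_mul_of_nonneg_left l1 (show (0:ℝ) ≤ 1/N by positivity)
    linarith
end
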